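/- Let p be prime and let g_1, ..., g_p ∈ {1, ..., p²−1} have all pairwise sums distinct mod p²−1, ordered increasingly. Fix ε ∈ (0,1) and let ℓ be the number of g_i ≤ (1/2 − ε²/8)p² and y the number of g_i < (1/2 + ε²/8)p². Then for p sufficiently large (depending on ε), y − ℓ ≤ (5ε/8)p. -/

import Mathlib

open Finset

noncomputable def repCount (A : Set ℤ) (n : ℤ) : ℕ :=
  {p : ℤ × ℤ | p.1 ∈ A ∧ p.2 ∈ A ∧ p.1 ≤ p.2 ∧ p.1 + p.2 = n}.ncard

def UniqueRepBasis (A : Set ℤ) : Prop := ∀ n : ℤ, repCount A n = 1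

def IsSidon (S : Set ℤ) : Prop :=
  ∀ a ∈ S, ∀ b ∈ S, ∀ c ∈ S, ∀ d ∈ S, a + b = c + d → (a = c ∧ b = d) ∨ (a = d ∧ b = c)

lemma sum_distinct_pos (T : Finset ℤ) (h : ∀ x ∈ T, 1 ≤ x) :
    (T.card : ℤ) * (T.card + 1) ≤ 2 * ∑ x ∈ T, x := by
  induction T using Finset.induction_on_max with
  | empty => simp
  | insert a s ha ih =>
    have ha1 : 1 ≤ a := h a (by simp)
    have hs : ∀ x ∈ s, 1 ≤ x := fun x hx => h x (by simp [hx])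
    have hsub : s ⊆ Finset.Icc 1 (a - 1) := fun x hx =>
      Finset.mem_Icc.2 ⟨hs x hx, by have := ha x hx; omega⟩
    have hcard : (s.card : ℤ) ≤ a - 1 := by
      have h2 := Finset.card_le_card hsub
      rw [Int.card_Icc] at h2
      omega
    have has : a ∉ s := fun hx => absurd (ha a hx) (lt_irrefl a)
    rw [Finset.card_insert_of_notMem has, Finset.sum_insert has]
    have := ih hs
    push_cast
    nlinarith [this]

lemma tele (f : ℕ → ℤ) (n k : ℕ) :
    ∑ i ∈ range n, (f (i + k) - f i) = ∑ j ∈ range k, (f (n + j) - f j) := by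
  have h1 : ∀ i, f (i + k) - f i = ∑ j ∈ range k, (f (i + j + 1) - f (i + j)) := by
    intro i
    have h := Finset.sum_range_sub (fun j => f (i + j)) k
    simp only [Nat.add_zero] at h
    rw [← h]
    exact Finset.sum_congr rfl fun j _ => by rw [show i + j + 1 = i + (j + 1) by omega]
  calc ∑ i ∈ range n, (f (i + k) - f i)
      = ∑ i ∈ range n, ∑ j ∈ range k, (f (i + j + 1) - f (i + j)) :=
        Finset.sum_congr rfl fun i _ => h1 i
    _ = ∑ j ∈ range k, ∑ i ∈ range n, (f (i + j + 1) - f (i + j)) := Finset.sum_comm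
    _ = ∑ j ∈ range k, (f (n + j) - f j) := by
        refine Finset.sum_congr rfl fun j _ => ?_
        have h := Finset.sum_range_sub (fun i => f (i + j)) n
        simp only [Nat.zero_add] at h
        rw [← h]
        exact Finset.sum_congr rfl fun i _ => by rw [show i + j + 1 = i + 1 + j by omega]

lemma main_aux (ε : ℝ) (hε0 : 0 < ε) (p : ℕ) (hεp : 320 ≤ ε * p)
    (g : Fin p → ℤ) (hmono : StrictMono g)
    (hsum : ∀ i j k l : Fin p, i ≤ j → k ≤ l →
      g i + g j ≡ g k + g l [ZMOD ((p : ℤ) ^ 2 - 1)] → i = k ∧ j = l)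
    (M : Finset (Fin p))
    (hM : ∀ i ∈ M, (1 / 2 - ε ^ 2 / 8) * (p : ℝ) ^ 2 < (g i : ℝ) ∧
      (g i : ℝ) < (1 / 2 + ε ^ 2 / 8) * (p : ℝ) ^ 2) :
    (M.card : ℝ) ≤ 5 * ε / 8 * p := by
  classical
  set c1 : ℝ := (1 / 2 - ε ^ 2 / 8) * (p : ℝ) ^ 2 with hc1
  set c2 : ℝ := (1 / 2 + ε ^ 2 / 8) * (p : ℝ) ^ 2 with hc2
  by_contra hcon
  push_neg at hcon
  set m := M.card with hm
  have hm200 : 200 ≤ m := by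
    by_contra hlt
    push_neg at hlt
    have : (m : ℝ) < 200 := by exact_mod_cast hlt
    nlinarith
  set e := M.orderEmbOfFin hm.symm with he
  set f : ℕ → ℤ := fun r => if h : r < m then g (e ⟨r, h⟩) else 0 with hf
  have hfval : ∀ r (h : r < m), f r = g (e ⟨r, h⟩) := fun r h => by
    simp only [hf, dif_pos h]
  have hfbd : ∀ r, r < m → c1 < (f r : ℝ) ∧ (f r : ℝ) < c2 := by
    intro r h
    rw [hfval r h]
    exact hM _ (Finset.orderEmbOfFin_mem M hm.symm ⟨r, h⟩)
  have hfmono : ∀ r s : ℕ, r < s → s < m → f r < f s := by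
    intro r s hrs hsm
    rw [hfval r (hrs.trans hsm), hfval s hsm]
    exact hmono (e.strictMono (by exact Fin.mk_lt_mk.2 hrs))
  set Pairs : Finset (ℕ × ℕ) := Finset.range (m - 4) ×ˢ Finset.Icc 1 4 with hP
  have hPmem : ∀ q ∈ Pairs, q.1 < m - 4 ∧ 1 ≤ q.2 ∧ q.2 ≤ 4 := by
    intro q hq
    rw [hP, Finset.mem_product, Finset.mem_range, Finset.mem_Icc] at hq
    exact ⟨hq.1, hq.2.1, hq.2.2⟩
  set d : ℕ × ℕ → ℤ := fun q => f (q.1 + q.2) - f q.1 with hd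
  -- injectivity
  have hinj : ∀ q ∈ Pairs, ∀ q' ∈ Pairs, d q = d q' → q = q' := by
    intro q hq q' hq' hdq
    obtain ⟨hq1, hq2, hq3⟩ := hPmem q hq
    obtain ⟨hq1', hq2', hq3'⟩ := hPmem q' hq'
    obtain ⟨i, k⟩ := q
    obtain ⟨j, l⟩ := q'
    simp only at hq1 hq2 hq3 hq1' hq2' hq3'
    have hik : i + k < m := by omega
    have hjl : j + l < m := by omega
    have him : i < m := by omega
    have hjm : j < m := by omega
    have h1 := hfval (i + k) hik
    have h2 := hfval j hjm
    have h3 := hfval (j + l) hjl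
    have h4 := hfval i him
    simp only [hd] at hdq
    have hgsum : g (e ⟨i + k, hik⟩) + g (e ⟨j, hjm⟩) =
        g (e ⟨j + l, hjl⟩) + g (e ⟨i, him⟩) := by linarith
    have hcases : (e ⟨i + k, hik⟩ = e ⟨j + l, hjl⟩ ∧ e ⟨j, hjm⟩ = e ⟨i, him⟩) ∨
        (e ⟨i + k, hik⟩ = e ⟨i, him⟩ ∧ e ⟨j, hjm⟩ = e ⟨j + l, hjl⟩) := by
      rcases le_total (e ⟨i + k, hik⟩) (e ⟨j, hjm⟩) with ha | ha <;>
        rcases le_total (e ⟨j + l, hjl⟩) (e ⟨i, him⟩) with hb | hb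
      · exact Or.inl (hsum _ _ _ _ ha hb (by rw [hgsum]))
      · have := hsum _ _ _ _ ha hb
          (by rw [hgsum, add_comm (g (e ⟨j + l, hjl⟩))])
        exact Or.inr this
      · have := hsum _ _ _ _ ha hb
          (by rw [add_comm (g (e ⟨i + k, hik⟩))] at hgsum; rw [hgsum])
        exact Or.inr ⟨this.2, this.1⟩
      · have := hsum _ _ _ _ ha hb
          (by rw [add_comm (g (e ⟨i + k, hik⟩))] at hgsum;
              rw [hgsum, add_comm (g (e ⟨j + l, hjl⟩))])
        exact Or.inl ⟨this.2, this.1⟩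
    have einj : Function.Injective e := e.injective
    rcases hcases with ⟨ha, hb⟩ | ⟨ha, hb⟩
    · have e1 : i + k = j + l := by simpa using congrArg Fin.val (einj ha)
      have e2 : j = i := by simpa using congrArg Fin.val (einj hb)
      have : k = l := by omega
      simp [e2, this]
    · have e1 : i + k = i := by simpa using congrArg Fin.val (einj ha)
      omega
  set T := Pairs.image d with hT
  have hTcard : T.card = (m - 4) * 4 := by
    rw [hT, Finset.card_image_of_injOn (fun x hx y hy => hinj x hx y hy),
      hP, Finset.card_product, Finset.card_range, Nat.card_Icc]
  have hTpos : ∀ x ∈ T, 1 ≤ x := by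
    intro x hx
    rw [hT, Finset.mem_image] at hx
    obtain ⟨q, hq, rfl⟩ := hx
    obtain ⟨h1, h2, h3⟩ := hPmem q hq
    have : f q.1 < f (q.1 + q.2) := hfmono q.1 (q.1 + q.2) (by omega) (by omega)
    simp only [hd]
    omega
  -- sum computation
  have hsumeq : ∑ x ∈ T, x = ∑ k ∈ Finset.Icc 1 4, ∑ j ∈ range k, (f ((m - 4) + j) - f j) := by
    rw [hT, Finset.sum_image (fun x hx y hy => hinj x hx y hy), hP, Finset.sum_product]
    rw [Finset.sum_comm]
    refine Finset.sum_congr rfl fun k _ => ?_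
    exact tele f (m - 4) k
  have hsumbd : ((∑ x ∈ T, x : ℤ) : ℝ) ≤ 10 * (c2 - c1) := by
    rw [hsumeq]
    push_cast
    have hterm : ∀ k ∈ (Finset.Icc 1 4 : Finset ℕ),
        ∑ j ∈ range k, (((f ((m - 4) + j) : ℝ)) - (f j : ℝ)) ≤ (k : ℝ) * (c2 - c1) := by
      intro k hk
      rw [Finset.mem_Icc] at hk
      have := Finset.sum_le_card_nsmul (range k)
        (fun j => ((f ((m - 4) + j) : ℝ)) - (f j : ℝ)) (c2 - c1) ?_
      · rwa [Finset.card_range, nsmul_eq_mul] at this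
      · intro j hj
        rw [Finset.mem_range] at hj
        have hb1 := hfbd ((m - 4) + j) (by omega)
        have hb2 := hfbd j (by omega)
        linarith [hb1.2, hb2.1]
    calc ∑ k ∈ (Finset.Icc 1 4 : Finset ℕ), ∑ j ∈ range k, (((f ((m - 4) + j) : ℝ)) - (f j : ℝ))
        ≤ ∑ k ∈ (Finset.Icc 1 4 : Finset ℕ), (k : ℝ) * (c2 - c1) := Finset.sum_le_sum hterm
      _ = 10 * (c2 - c1) := by
          rw [show (Finset.Icc 1 4 : Finset ℕ) = {1, 2, 3, 4} by decide]
          simp [Finset.sum_insert, Finset.mem_insert]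
          ring
  have hNN := sum_distinct_pos T hTpos
  have hNNR : ((T.card : ℝ)) * ((T.card : ℝ) + 1) ≤ 20 * (c2 - c1) := by
    have h := hsumbd
    push_cast at h
    have h2 : (((T.card : ℤ) * ((T.card : ℤ) + 1) : ℤ) : ℝ) ≤ ((2 * ∑ x ∈ T, x : ℤ) : ℝ) := by
      exact_mod_cast hNN
    push_cast at h2
    linarith
  have hcc : c2 - c1 = ε ^ 2 / 4 * (p : ℝ) ^ 2 := by rw [hc1, hc2]; ring
  rw [hTcard] at hNNR
  have hcast : ((((m - 4) * 4 : ℕ)) : ℝ) = 4 * ((m : ℝ) - 4) := by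
    have : (4 : ℕ) ≤ m := by omega
    push_cast [Nat.cast_sub this]
    ring
  rw [hcast, hcc] at hNNR
  -- final contradiction
  have hεp0 : 0 < ε * p := by linarith
  have hA1 : (49 / 20) * (ε * p) ≤ 4 * ((m : ℝ) - 4) := by
    have : 5 * ε / 8 * p < (m : ℝ) := hcon
    nlinarith
  have hsq : ((49 / 20) * (ε * p)) * ((49 / 20) * (ε * p)) ≤
      (4 * ((m : ℝ) - 4)) * (4 * ((m : ℝ) - 4)) := by
    have h0 : 0 ≤ (49 / 20) * (ε * p) := by positivity
    exact mul_le_mul hA1 hA1 h0 (by linarith)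
  nlinarith [hsq, hNNR, hεp0, mul_pos hεp0 hεp0]

theorem stmt_16 (ε : ℝ) (hε0 : 0 < ε) (hε1 : ε < 1) :
    ∃ P : ℕ, ∀ p : ℕ, p.Prime → P ≤ p →
      ∀ g : Fin p → ℤ, StrictMono g →
        (∀ i, g i ∈ Set.Icc (1 : ℤ) ((p : ℤ) ^ 2 - 1)) →
        (∀ i j k l : Fin p, i ≤ j → k ≤ l →
          g i + g j ≡ g k + g l [ZMOD ((p : ℤ) ^ 2 - 1)] → i = k ∧ j = l) →
        ((Finset.univ.filter (fun i : Fin p =>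
            ((g i : ℝ) < (1 / 2 + ε ^ 2 / 8) * (p : ℝ) ^ 2))).card : ℝ) -
        ((Finset.univ.filter (fun i : Fin p =>
            ((g i : ℝ) ≤ (1 / 2 - ε ^ 2 / 8) * (p : ℝ) ^ 2))).card : ℝ)
        ≤ 5 * ε / 8 * (p : ℝ) := by
  refine ⟨⌈(320 : ℝ) / ε⌉₊, fun p hp hPp g hmono hrange hsum => ?_⟩
  classical
  have hεp : 320 ≤ ε * p := by
    have h1 : ((320 : ℝ) / ε) ≤ (p : ℝ) :=
      le_trans (Nat.le_ceil _) (by exact_mod_cast hPp)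
    rw [div_le_iff₀ hε0] at h1
    linarith
  set A := Finset.univ.filter (fun i : Fin p =>
    ((g i : ℝ) < (1 / 2 + ε ^ 2 / 8) * (p : ℝ) ^ 2)) with hA
  set B := Finset.univ.filter (fun i : Fin p =>
    ((g i : ℝ) ≤ (1 / 2 - ε ^ 2 / 8) * (p : ℝ) ^ 2)) with hB
  have hp2 : (0 : ℝ) < (p : ℝ) ^ 2 := by
    have : 0 < p := hp.pos
    positivity
  have hBA : B ⊆ A := by
    intro i hi
    rw [hB, Finset.mem_filter] at hi
    rw [hA, Finset.mem_filter]
    refine ⟨Finset.mem_univ _, ?_⟩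
    nlinarith [hi.2]
  have hkey : (((A \ B).card : ℝ)) ≤ 5 * ε / 8 * p := by
    apply main_aux ε hε0 p hεp g hmono hsum
    intro i hi
    rw [Finset.mem_sdiff, hA, hB, Finset.mem_filter, Finset.mem_filter] at hi
    constructor
    · by_contra hle
      exact hi.2 ⟨Finset.mem_univ _, by push_neg at hle; linarith⟩
    · exact hi.1.2
  have := Finset.cast_card_sdiff (R := ℝ) hBA
  linarith
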